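/- Let A be a unital complex *-algebra and let τ₁ and τ₂ be two topologies on A, each making A a unital pro-C*-algebra. Then the sets of bounded elements with respect to τ₁ and τ₂ coincide: an element a ∈ A satisfies sup_p p(a) < ∞ over all τ₁-continuous C*-seminorms p if and only if it satisfies the corresponding condition for τ₂. That is, A_b depends only on the underlying *-algebra of A, not on its topology. -/

import Mathlib

open scoped ENNReal

def IsCStarSeminorm {A : Type*} [Ring A] [StarRing A] [Algebra ℂ A] (p : A → ℝ) : Prop :=
  (∀ a, 0 ≤ p a) ∧ (∀ a b, p (a + b) ≤ p a + p b) ∧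
    (∀ (c : ℂ) (a : A), p (c • a) = ‖c‖ * p a) ∧
    (∀ a b, p (a * b) ≤ p a * p b) ∧ (∀ a, p (star a * a) = p a ^ 2)

def contCStarSeminorms (A : Type*) [TopologicalSpace A] [Ring A] [StarRing A] [Algebra ℂ A] :
    Set (A → ℝ) :=
  {p | IsCStarSeminorm p ∧ Continuous p}

class ProCStarAlgebra (A : Type*) [UniformSpace A] [Ring A] [StarRing A] [Algebra ℂ A] :
    Prop where
  t2 : T2Space A
  complete : CompleteSpace A
  topologicalRing : IsTopologicalRing A
  continuousStar : ContinuousStar A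
  uniformAddGroup : IsUniformAddGroup A
  mem_nhds_zero : ∀ s : Set A, s ∈ nhds (0 : A) ↔
    ∃ p ∈ contCStarSeminorms A, ∃ ε : ℝ, 0 < ε ∧ {a : A | p a < ε} ⊆ s

noncomputable def uniformNorm (A : Type*) [UniformSpace A] [Ring A] [StarRing A] [Algebra ℂ A]
    (a : A) : ℝ≥0∞ :=
  ⨆ p ∈ contCStarSeminorms A, ENNReal.ofReal (p a)

def boundedElems (A : Type*) [UniformSpace A] [Ring A] [StarRing A] [Algebra ℂ A] : Set A :=
  {a | uniformNorm A a < ⊤}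

def expSet (A : Type*) [UniformSpace A] [Ring A] [StarRing A] [Algebra ℂ A] : Set A :=
  {w | ∃ (n : ℕ) (a e : Fin n → A),
    (∀ j, star (a j) = a j) ∧
    (∀ j, HasSum (fun k : ℕ => ((Complex.I ^ k / (k.factorial : ℂ)) • a j ^ k)) (e j)) ∧
    w = (List.ofFn e).prod}

namespace IsCStarSeminorm

variable {A : Type*} [Ring A] [StarRing A] [Algebra ℂ A] {p : A → ℝ} (hp : IsCStarSeminorm p)
include hp

theorem nonneg (a : A) : 0 ≤ p a := hp.1 a
theorem add_le (a b : A) : p (a + b) ≤ p a + p b := hp.2.1 a b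
theorem smul (c : ℂ) (a : A) : p (c • a) = ‖c‖ * p a := hp.2.2.1 c a
theorem mul_le (a b : A) : p (a * b) ≤ p a * p b := hp.2.2.2.1 a b
theorem cstar (a : A) : p (star a * a) = p a ^ 2 := hp.2.2.2.2 a

theorem zero : p 0 = 0 := by
  have := hp.smul 0 0
  simpa using this

theorem neg (a : A) : p (-a) = p a := by
  have := hp.smul (-1) a
  simpa using this

theorem one_le : p 1 ≤ 1 := by
  have h := hp.cstar 1
  rw [star_one, one_mul] at h
  nlinarith [hp.nonneg 1]

theorem star_eq (a : A) : p (star a) = p a := by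
  have h1 : p a ^ 2 ≤ p (star a) * p a := by
    rw [← hp.cstar a]; exact hp.mul_le (star a) a
  have h2 : p (star a) ^ 2 ≤ p a * p (star a) := by
    have := hp.cstar (star a)
    rw [star_star] at this
    rw [← this]; exact hp.mul_le a (star a)
  have := hp.nonneg a
  have := hp.nonneg (star a)
  nlinarith

theorem sum_le {ι : Type*} (s : Finset ι) (f : ι → A) :
    p (∑ i ∈ s, f i) ≤ ∑ i ∈ s, p (f i) := by
  classical
  induction s using Finset.induction_on with
  | empty => simp [hp.zero]
  | insert _ _ h ih =>
    rw [Finset.sum_insert h, Finset.sum_insert h]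
    exact (hp.add_le _ _).trans (by linarith)

theorem pow_le {a : A} {r : ℝ} (ha : p a ≤ r) (hr : 0 ≤ r) (k : ℕ) : p (a ^ k) ≤ r ^ k := by
  induction k with
  | zero => simpa using hp.one_le
  | succ k ih =>
    rw [pow_succ, pow_succ]
    exact (hp.mul_le _ _).trans (mul_le_mul ih ha (hp.nonneg a) (pow_nonneg hr k))

end IsCStarSeminorm

/-- Bundled C*-seminorm. -/
structure CSN (A : Type*) [Ring A] [StarRing A] [Algebra ℂ A] where
  q : A → ℝ
  isCSN : IsCStarSeminorm q


section QAConstr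

open UniformSpace UniformSpace.Completion

variable {A : Type*} [Ring A] [StarRing A] [Algebra ℂ A]

/-- Type synonym carrying the seminormed structure from a C*-seminorm. -/
def QA (_n : CSN A) : Type _ := A

/-- Cast from `A` to the synonym. -/
def toQA (n : CSN A) (a : A) : QA n := a

variable (n : CSN A)

instance : Ring (QA n) := ‹Ring A›
instance : StarRing (QA n) := ‹StarRing A›
instance : Algebra ℂ (QA n) := ‹Algebra ℂ A›

/-- The seminorm as an `AddGroupSeminorm`. -/
def qaSeminorm : AddGroupSeminorm (QA n) where
  toFun := n.q
  map_zero' := n.isCSN.zero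
  add_le' := n.isCSN.add_le
  neg' := n.isCSN.neg

noncomputable instance : SeminormedAddCommGroup (QA n) :=
  AddGroupSeminormClass.toSeminormedAddCommGroup (qaSeminorm n)

theorem qa_norm (x : QA n) : ‖x‖ = n.q x := rfl

noncomputable instance : SeminormedRing (QA n) :=
  { (inferInstance : SeminormedAddCommGroup (QA n)), (inferInstance : Ring (QA n)) with
    norm_mul_le := n.isCSN.mul_le }

instance : NormedSpace ℂ (QA n) := ⟨fun c x => le_of_eq (n.isCSN.smul c x)⟩

theorem qa_norm_star (x : QA n) : ‖star x‖ = ‖x‖ := n.isCSN.star_eq x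

theorem qa_star_isometry : Isometry (star : QA n → QA n) :=
  Isometry.of_dist_eq fun a b => by
    rw [dist_eq_norm, dist_eq_norm, ← star_sub, qa_norm_star]

theorem qa_star_uc : UniformContinuous (star : QA n → QA n) :=
  (qa_star_isometry n).uniformContinuous

instance : UniformContinuousConstSMul ℂ (QA n) :=
  ⟨fun c => (lipschitzWith_smul c).uniformContinuous⟩

/-- The star operation on the completion. -/
noncomputable def qaCompStar : Completion (QA n) → Completion (QA n) :=
  Completion.map (star : QA n → QA n)

theorem qaCompStar_coe (a : QA n) : qaCompStar n (a : Completion (QA n)) = ((star a : QA n) : Completion (QA n)) :=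
  map_coe (qa_star_uc n) a

theorem qaCompStar_continuous : Continuous (qaCompStar n) := Completion.continuous_map

theorem qaCompStar_invol : Function.Involutive (qaCompStar n) := by
  intro x
  induction x using Completion.induction_on with
  | hp =>
    apply isClosed_eq
    · exact (qaCompStar_continuous n).comp (qaCompStar_continuous n)
    · exact continuous_id
  | ih a => rw [qaCompStar_coe, qaCompStar_coe, star_star]

theorem qaCompStar_mul (x y : Completion (QA n)) :
    qaCompStar n (x * y) = qaCompStar n y * qaCompStar n x := by
  refine Completion.induction_on₂ x y ?_ fun a b => ?_
  · apply isClosed_eq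
    · exact (qaCompStar_continuous n).comp (continuous_fst.mul continuous_snd)
    · exact ((qaCompStar_continuous n).comp continuous_snd).mul
        ((qaCompStar_continuous n).comp continuous_fst)
  · rw [← coe_mul, qaCompStar_coe, qaCompStar_coe, qaCompStar_coe, star_mul, coe_mul]

theorem qaCompStar_add (x y : Completion (QA n)) :
    qaCompStar n (x + y) = qaCompStar n x + qaCompStar n y := by
  refine Completion.induction_on₂ x y ?_ fun a b => ?_
  · apply isClosed_eq
    · exact (qaCompStar_continuous n).comp (continuous_fst.add continuous_snd)
    · exact ((qaCompStar_continuous n).comp continuous_fst).add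
        ((qaCompStar_continuous n).comp continuous_snd)
  · rw [← coe_add, qaCompStar_coe, qaCompStar_coe, qaCompStar_coe, star_add, coe_add]

noncomputable instance : StarRing (Completion (QA n)) where
  star := qaCompStar n
  star_involutive := qaCompStar_invol n
  star_mul := qaCompStar_mul n
  star_add := qaCompStar_add n

theorem qa_star_coe (a : QA n) :
    star ((a : Completion (QA n))) = ((star a : QA n) : Completion (QA n)) :=
  qaCompStar_coe n a

instance : ContinuousStar (Completion (QA n)) := ⟨qaCompStar_continuous n⟩

theorem qa_comp_norm_star_mul_self (x : Completion (QA n)) : ‖star x * x‖ = ‖x‖ * ‖x‖ := by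
  induction x using Completion.induction_on with
  | hp =>
    apply isClosed_eq
    · exact continuous_norm.comp (continuous_star.mul continuous_id)
    · exact continuous_norm.mul continuous_norm
  | ih a =>
    rw [qa_star_coe, ← coe_mul, UniformSpace.Completion.norm_coe,
      UniformSpace.Completion.norm_coe, qa_norm, qa_norm]
    exact (n.isCSN.cstar a).trans (sq _)

instance : CStarRing (Completion (QA n)) :=
  ⟨fun {x} => le_of_eq (qa_comp_norm_star_mul_self n x).symm⟩

noncomputable instance : NormedAlgebra ℂ (Completion (QA n)) :=
  { (inferInstance : Algebra ℂ (Completion (QA n))) with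
    norm_smul_le := fun c x => norm_smul_le c x }

end QAConstr

section Spec

open Filter Topology ENNReal

/-- Spectral radius equals norm for selfadjoint elements; weak typeclass version
(no `StarModule` needed). -/
theorem auxSpectralRadius {B : Type*} [NormedRing B] [StarRing B] [CStarRing B]
    [NormedAlgebra ℂ B] [CompleteSpace B] {x : B} (hx : IsSelfAdjoint x) :
    spectralRadius ℂ x = ‖x‖₊ := by
  have hconst : Tendsto (fun _ : ℕ => ((‖x‖₊ : ℝ≥0∞))) atTop (𝓝 ‖x‖₊) := tendsto_const_nhds
  refine tendsto_nhds_unique ?_ hconst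
  convert (spectrum.pow_nnnorm_pow_one_div_tendsto_nhds_spectralRadius x).comp
      (tendsto_pow_atTop_atTop_of_one_lt one_lt_two) using 1
  refine funext fun n => ?_
  rw [Function.comp_apply, hx.nnnorm_pow_two_pow, ENNReal.coe_pow, ← ENNReal.rpow_natCast,
    ← ENNReal.rpow_mul]
  simp

theorem auxSpec {B : Type*} [NormedRing B] [StarRing B] [CStarRing B]
    [NormedAlgebra ℂ B] [CompleteSpace B] {x : B} (hx : IsSelfAdjoint x) {r : ℝ}
    (hr0 : 0 ≤ r) (hr : r < ‖x‖)
    (hu : ∀ z : ℂ, r < ‖z‖ → IsUnit (algebraMap ℂ B z - x)) : False := by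
  have hble : spectralRadius ℂ x ≤ ENNReal.ofReal r := by
    refine iSup₂_le fun z hz => ?_
    have hnu : ¬ IsUnit (algebraMap ℂ B z - x) := spectrum.mem_iff.mp hz
    have hzr : ‖z‖ ≤ r := le_of_not_gt fun h => hnu (hu z h)
    calc ((‖z‖₊ : ℝ≥0∞)) = ENNReal.ofReal ‖z‖ := (ofReal_norm z).symm
    _ ≤ ENNReal.ofReal r := ENNReal.ofReal_le_ofReal hzr
  rw [auxSpectralRadius hx] at hble
  have : ‖x‖ ≤ r := by
    have := ENNReal.toReal_mono ENNReal.ofReal_ne_top hble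
    rwa [ENNReal.coe_toReal, coe_nnnorm, ENNReal.toReal_ofReal hr0] at this
  linarith

end Spec

section Neumann

open Filter Topology Finset

variable {A : Type*} [Ring A] [StarRing A] [Algebra ℂ A]

theorem geom_tail_le {r : ℝ} (hr0 : 0 ≤ r) (hr1 : r < 1) (N M : ℕ) :
    ∑ k ∈ Finset.Ico N M, r ^ k ≤ r ^ N * (1 - r)⁻¹ := by
  rw [Finset.sum_Ico_eq_sum_range]
  have h1r : (0:ℝ) < 1 - r := by linarith
  have : ∑ i ∈ Finset.range (M - N), r ^ (N + i) = r ^ N * ∑ i ∈ Finset.range (M - N), r ^ i := by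
    rw [Finset.mul_sum]
    exact Finset.sum_congr rfl fun i _ => by rw [pow_add]
  rw [this]
  refine mul_le_mul_of_nonneg_left ?_ (pow_nonneg hr0 N)
  rw [geom_sum_eq (ne_of_lt hr1)]
  rw [div_le_iff_of_neg (by linarith : r - 1 < 0)]
  have hinv : (1 - r)⁻¹ * (r - 1) = -1 := by field_simp; ring
  rw [hinv]
  nlinarith [pow_nonneg hr0 (M - N)]

theorem exists_inverse [us : UniformSpace A] (h : ProCStarAlgebra A) (c : A) {r : ℝ}
    (hr0 : 0 ≤ r) (hr1 : r < 1)
    (hc : ∀ p ∈ contCStarSeminorms A, p c ≤ r) :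
    ∃ u : A, (1 - c) * u = 1 ∧ u * (1 - c) = 1 := by
  haveI := h.t2
  haveI := h.complete
  haveI := h.topologicalRing
  haveI := h.uniformAddGroup
  set S : ℕ → A := fun N => ∑ k ∈ Finset.range N, c ^ k with hS
  have key : ∀ p ∈ contCStarSeminorms A, ∀ {k l : ℕ}, k ≤ l →
      p (S l - S k) ≤ r ^ k * (1 - r)⁻¹ := by
    intro p hp k l hkl
    have hcs := hp.1
    rw [hS]
    simp only
    rw [← Finset.sum_Ico_eq_sub _ hkl]
    calc p (∑ j ∈ Finset.Ico k l, c ^ j) ≤ ∑ j ∈ Finset.Ico k l, p (c ^ j) :=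
          hcs.sum_le _ _
      _ ≤ ∑ j ∈ Finset.Ico k l, r ^ j :=
          Finset.sum_le_sum fun j _ => hcs.pow_le (hc p hp) hr0 j
      _ ≤ r ^ k * (1 - r)⁻¹ := geom_tail_le hr0 hr1 k l
  have h1r : (0:ℝ) < 1 - r := by linarith
  have hcauchy : CauchySeq S := by
    rw [cauchySeq_iff]
    intro V hV
    rw [uniformity_eq_comap_nhds_zero A] at hV
    obtain ⟨U, hU, hUV⟩ := Filter.mem_comap.mp hV
    obtain ⟨p, hp, ε, hε, hball⟩ := (h.mem_nhds_zero U).mp hU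
    obtain ⟨N, hN⟩ : ∃ N : ℕ, r ^ N * (1 - r)⁻¹ < ε := by
      obtain ⟨N, hN⟩ := exists_pow_lt_of_lt_one (mul_pos hε h1r) hr1
      refine ⟨N, ?_⟩
      have h2 := mul_lt_mul_of_pos_right hN (inv_pos.mpr h1r)
      rwa [mul_assoc, mul_inv_cancel₀ (ne_of_gt h1r), mul_one] at h2
    refine ⟨N, fun k hk l hl => hUV ?_⟩
    have hb : ∀ {k l : ℕ}, N ≤ k → k ≤ l → p (S l - S k) < ε := by
      intro k l hNk hkl
      refine lt_of_le_of_lt ((key p hp hkl).trans ?_) hN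
      exact mul_le_mul_of_nonneg_right (pow_le_pow_of_le_one hr0 hr1.le hNk)
        (inv_nonneg.mpr h1r.le)
    show S l - S k ∈ U
    rcases le_total k l with hkl | hlk
    · exact hball (hb hk hkl)
    · have heq : p (S l - S k) = p (S k - S l) := by
        rw [← hp.1.neg (S k - S l), neg_sub]
      refine hball ?_
      show p (S l - S k) < ε
      rw [heq]
      exact hb hl hlk
  obtain ⟨u, hu⟩ := cauchySeq_tendsto_of_complete hcauchy
  have hpow : Tendsto (fun N : ℕ => c ^ N) atTop (𝓝 (0 : A)) := by
    rw [tendsto_def]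
    intro U hU
    obtain ⟨p, hp, ε, hε, hball⟩ := (h.mem_nhds_zero U).mp hU
    obtain ⟨N₀, hN₀⟩ := exists_pow_lt_of_lt_one hε hr1
    refine Filter.mem_of_superset (Filter.mem_atTop N₀) fun N hN => ?_
    refine hball (lt_of_le_of_lt ((hp.1.pow_le (hc p hp) hr0 N).trans ?_) hN₀)
    exact pow_le_pow_of_le_one hr0 hr1.le hN
  have hgeoml : ∀ N : ℕ, (1 - c) * S N = 1 - c ^ N := by
    intro N
    calc (1 - c) * S N = -((c - 1) * S N) := by rw [← neg_sub c 1, neg_mul]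
      _ = -(c ^ N - 1) := by rw [mul_geom_sum]
      _ = 1 - c ^ N := by rw [neg_sub]
  have hgeomr : ∀ N : ℕ, S N * (1 - c) = 1 - c ^ N := by
    intro N
    calc S N * (1 - c) = -(S N * (c - 1)) := by rw [← neg_sub c 1, mul_neg]
      _ = -(c ^ N - 1) := by rw [geom_sum_mul]
      _ = 1 - c ^ N := by rw [neg_sub]
  have hR : Tendsto (fun N : ℕ => 1 - c ^ N) atTop (𝓝 (1 - 0)) := tendsto_const_nhds.sub hpow
  have e1 : (1 - c) * u = 1 := by
    have hL : Tendsto (fun N : ℕ => (1 - c) * S N) atTop (𝓝 ((1 - c) * u)) :=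
      hu.const_mul (1 - c)
    have := tendsto_nhds_unique (hL.congr fun N => hgeoml N) hR
    rwa [sub_zero] at this
  have e2 : u * (1 - c) = 1 := by
    have hL : Tendsto (fun N : ℕ => S N * (1 - c)) atTop (𝓝 (u * (1 - c))) :=
      hu.mul_const (1 - c)
    have := tendsto_nhds_unique (hL.congr fun N => hgeomr N) hR
    rwa [sub_zero] at this
  exact ⟨u, e1, e2⟩

end Neumann

section Main

open UniformSpace UniformSpace.Completion

variable {A : Type*} [Ring A] [StarRing A] [Algebra ℂ A]

/-- Any C*-seminorm (continuous or not) is dominated by any uniform bound for the continuous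
C*-seminorms of a pro-C*-topology. -/
theorem q_le_of_forall_cont (us : UniformSpace A) (h : @ProCStarAlgebra A us _ _ _) (n : CSN A)
    {M : ℝ} (hM : 0 ≤ M) {a : A}
    (ha : ∀ p ∈ @contCStarSeminorms A us.toTopologicalSpace _ _ _, p a ≤ M) :
    n.q a ≤ M := by
  by_contra hlt
  push_neg at hlt
  set x : A := star a * a with hx
  -- units in `A` for `M ^ 2 < ‖z‖`
  have hunit : ∀ z : ℂ, M ^ 2 < ‖z‖ →
      ∃ u : A, (algebraMap ℂ A z - x) * u = 1 ∧ u * (algebraMap ℂ A z - x) = 1 := by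
    intro z hz
    have hznorm : (0:ℝ) < ‖z‖ := lt_of_le_of_lt (sq_nonneg M) hz
    have hz0 : z ≠ 0 := by
      intro h0
      rw [h0, norm_zero] at hznorm
      exact lt_irrefl _ hznorm
    set r : ℝ := M ^ 2 / ‖z‖ with hr
    have hr0 : 0 ≤ r := div_nonneg (sq_nonneg M) (norm_nonneg z)
    have hr1 : r < 1 := (div_lt_one hznorm).mpr hz
    set c : A := (z⁻¹ : ℂ) • x with hc
    have hcb : ∀ p ∈ @contCStarSeminorms A us.toTopologicalSpace _ _ _, p c ≤ r := by
      intro p hp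
      have hps := hp.1
      have hxb : p x ≤ M ^ 2 := by
        rw [hx, hps.cstar]
        have := ha p hp
        nlinarith [hps.nonneg a]
      calc p c = ‖(z⁻¹ : ℂ)‖ * p x := hps.smul _ _
        _ ≤ ‖(z⁻¹ : ℂ)‖ * M ^ 2 := by
            exact mul_le_mul_of_nonneg_left hxb (norm_nonneg _)
        _ = M ^ 2 / ‖z‖ := by rw [norm_inv]; ring
    obtain ⟨u, hu1, hu2⟩ := @exists_inverse A _ _ _ us h c r hr0 hr1 hcb
    have hkey : algebraMap ℂ A z - x = algebraMap ℂ A z * (1 - c) := by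
      rw [mul_sub, mul_one, hc, ← Algebra.smul_def, smul_smul, mul_inv_cancel₀ hz0, one_smul]
    refine ⟨u * algebraMap ℂ A z⁻¹, ?_, ?_⟩
    · calc (algebraMap ℂ A z - x) * (u * algebraMap ℂ A z⁻¹)
          = algebraMap ℂ A z * ((1 - c) * u) * algebraMap ℂ A z⁻¹ := by
            rw [hkey]; noncomm_ring
      _ = 1 := by
            rw [hu1, mul_one, ← map_mul, mul_inv_cancel₀ hz0, map_one]
    · calc (u * algebraMap ℂ A z⁻¹) * (algebraMap ℂ A z - x)
          = u * (algebraMap ℂ A z⁻¹ * algebraMap ℂ A z) * (1 - c) := by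
            rw [hkey]; noncomm_ring
      _ = 1 := by
            rw [← map_mul, inv_mul_cancel₀ hz0, map_one, mul_one, hu2]
  -- transfer to the C*-completion
  let ψ : QA n →+* Completion (QA n) := coeRingHom
  have hxsa : star x = x := by rw [hx, star_mul, star_star]
  have hsa : IsSelfAdjoint (ψ x) := by
    show star (ψ x) = ψ x
    show star ((toQA n x : QA n) : Completion (QA n)) = ((toQA n x : QA n) : Completion (QA n))
    rw [qa_star_coe]
    exact congrArg _ hxsa
  have hnorm : M ^ 2 < ‖ψ x‖ := by
    show M ^ 2 < ‖((toQA n x : QA n) : Completion (QA n))‖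
    rw [UniformSpace.Completion.norm_coe, qa_norm]
    show M ^ 2 < n.q (star a * a)
    rw [n.isCSN.cstar]
    nlinarith
  refine auxSpec hsa (sq_nonneg M) hnorm fun z hz => ?_
  obtain ⟨u, hu1, hu2⟩ := hunit z hz
  have hmap : algebraMap ℂ (Completion (QA n)) z - ψ x = ψ (algebraMap ℂ A z - x) := by
    show _ = ψ (toQA n (algebraMap ℂ A z) - toQA n x)
    rw [map_sub]
    congr 1
  rw [hmap]
  exact ⟨⟨ψ (algebraMap ℂ A z - x), ψ u, (map_mul ψ _ _).symm.trans ((congrArg ψ hu1).trans (map_one ψ)),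
    (map_mul ψ _ _).symm.trans ((congrArg ψ hu2).trans (map_one ψ))⟩, rfl⟩

theorem bounded_subset (u₁ u₂ : UniformSpace A)
    (h₁ : @ProCStarAlgebra A u₁ _ _ _) (h₂ : @ProCStarAlgebra A u₂ _ _ _) :
    @boundedElems A u₁ _ _ _ ⊆ @boundedElems A u₂ _ _ _ := by
  intro a ha
  have hlt : @uniformNorm A u₁ _ _ _ a < ⊤ := ha
  set M : ℝ := (@uniformNorm A u₁ _ _ _ a).toReal with hM
  have hM0 : 0 ≤ M := ENNReal.toReal_nonneg
  have hbound : ∀ p ∈ @contCStarSeminorms A u₁.toTopologicalSpace _ _ _, p a ≤ M := by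
    intro p hp
    have h1 : ENNReal.ofReal (p a) ≤ @uniformNorm A u₁ _ _ _ a :=
      le_iSup₂ (f := fun (p : A → ℝ) (_ : p ∈ @contCStarSeminorms A u₁.toTopologicalSpace _ _ _)
        => ENNReal.ofReal (p a)) p hp
    have h2 := ENNReal.toReal_mono (ne_of_lt hlt) h1
    rwa [ENNReal.toReal_ofReal (hp.1.nonneg a)] at h2
  have hq : ∀ q ∈ @contCStarSeminorms A u₂.toTopologicalSpace _ _ _, q a ≤ M := fun q hq =>
    q_le_of_forall_cont u₁ h₁ ⟨q, hq.1⟩ hM0 hbound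
  have : @uniformNorm A u₂ _ _ _ a ≤ ENNReal.ofReal M :=
    iSup₂_le fun q hqs => ENNReal.ofReal_le_ofReal (hq q hqs)
  exact lt_of_le_of_lt this ENNReal.ofReal_lt_top

end Main

/-- If a unital complex *-algebra `A` carries two (uniform) topologies
`u₁`, `u₂`, each making it a unital pro-C*-algebra, then the sets of bounded elements with
respect to the two topologies coincide: `A_b` depends only on the underlying *-algebra. -/
theorem stmt11 {A : Type*} [Ring A] [StarRing A] [Algebra ℂ A]
    (u₁ u₂ : UniformSpace A)
    (h₁ : @ProCStarAlgebra A u₁ _ _ _) (h₂ : @ProCStarAlgebra A u₂ _ _ _) :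
    @boundedElems A u₁ _ _ _ = @boundedElems A u₂ _ _ _ :=
  Set.Subset.antisymm (bounded_subset u₁ u₂ h₁ h₂) (bounded_subset u₂ u₁ h₂ h₁)
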